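/- Let d : ℕ → A be admissible and eventually periodic. Then the set { j ∈ ℕ | ∃ k < j, σ^k d = σ^j d } is nonempty; let p be its least element. Then for every n ∈ ℕ: if n < p then |F(n)| = n + 1, and if n ≥ p then |F(n)| = p. -/

import Mathlib

namespace BetaShift

variable {A : Type*}

/-- The shift map: `(shift x) n = x (n+1)`. -/
def shift (x : ℕ → A) : ℕ → A := fun n => x (n + 1)

/-- Lexicographic order on one-sided sequences: `x = y`, or there is an index `i`
such that `x j = y j` for all `j < i` and `x i < y i`. -/
def SeqLe [LinearOrder A] (x y : ℕ → A) : Prop :=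
  x = y ∨ ∃ i, (∀ j, j < i → x j = y j) ∧ x i < y i

/-- A word `w` occurs in the sequence `x`. -/
def Occurs (w : List A) (x : ℕ → A) : Prop :=
  ∃ i : ℕ, ∀ j : Fin w.length, x (i + j) = w.get j

/-- `Complexity x n` is the number `Φ_n(x)` of distinct words of length `n` occurring in `x`. -/
noncomputable def Complexity (x : ℕ → A) (n : ℕ) : ℕ :=
  Set.ncard {w : List A | w.length = n ∧ Occurs w x}

/-- A sequence is eventually periodic if there are `p ≥ 1` and `N` with
`d (i + p) = d i` for all `i ≥ N`. -/
def EventuallyPeriodic (d : ℕ → A) : Prop :=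
  ∃ p, 1 ≤ p ∧ ∃ N, ∀ i, N ≤ i → d (i + p) = d i

/-- `(d)_k`, the `k`-letter prefix of the sequence `d`, as a word. -/
def prefixWord (d : ℕ → A) (k : ℕ) : List A := List.ofFn (fun i : Fin k => d i)

variable {m : ℕ}

/-- `d` is admissible: every shift of `d` is lexicographically ≤ `d`,
and `d` is not eventually `0`. -/
def Admissible (d : ℕ → Fin m) : Prop :=
  (∀ i, SeqLe (shift^[i] d) d) ∧ ∀ N, ∃ i, N ≤ i ∧ (d i).val ≠ 0

/-- The one-sided β-shift `X_d` determined by the admissible sequence `d`. -/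
def XSet (d : ℕ → Fin m) : Set (ℕ → Fin m) :=
  {x | ∀ i, SeqLe (shift^[i] x) d}

/-- The language of `X_d`: all words occurring in some point of `X_d`. -/
def Lang (d : ℕ → Fin m) : Set (List (Fin m)) :=
  {w | ∃ x ∈ XSet d, Occurs w x}

/-- The follower set of the word `w` in `X_d`. -/
def Fol (d : ℕ → Fin m) (w : List (Fin m)) : Set (List (Fin m)) :=
  {u | w ++ u ∈ Lang d}

/-- The predecessor set of the word `w` in `X_d`. -/
def Pred (d : ℕ → Fin m) (w : List (Fin m)) : Set (List (Fin m)) :=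
  {s | s ++ w ∈ Lang d}

/-- The extender set of the word `w` in `X_d`. -/
def Ext (d : ℕ → Fin m) (w : List (Fin m)) : Set (List (Fin m) × List (Fin m)) :=
  {p | p.1 ++ w ++ p.2 ∈ Lang d}

/-- `|F(n)|`: the number of distinct follower sets of words of length `n` in `X_d`. -/
noncomputable def FolCount (d : ℕ → Fin m) (n : ℕ) : ℕ :=
  Set.ncard {S | ∃ w ∈ Lang d, w.length = n ∧ S = Fol d w}

/-- `|P(n)|`: the number of distinct predecessor sets of words of length `n` in `X_d`. -/
noncomputable def PredCount (d : ℕ → Fin m) (n : ℕ) : ℕ :=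
  Set.ncard {S | ∃ w ∈ Lang d, w.length = n ∧ S = Pred d w}

/-- `|E(n)|`: the number of distinct extender sets of words of length `n` in `X_d`. -/
noncomputable def ExtCount (d : ℕ → Fin m) (n : ℕ) : ℕ :=
  Set.ncard {S | ∃ w ∈ Lang d, w.length = n ∧ S = Ext d w}

/-- The largest `k ≤ n` such that the `k`-letter prefix of `d` is a suffix of `v`
(`k = 0`, the empty prefix, always works). -/
def classIndex (d : ℕ → Fin m) (n : ℕ) (v : List (Fin m)) : ℕ :=
  Nat.findGreatest (fun k => prefixWord d k <:+ v) n

/-- Lexicographic comparison of (equal-length) words: `u = v`, or at the first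
index where they differ, `u` takes the smaller value. -/
def WordLe [LinearOrder A] (u v : List A) : Prop :=
  u = v ∨ ∃ i, ∃ (hu : i < u.length) (hv : i < v.length),
    (∀ j (hju : j < u.length) (hjv : j < v.length), j < i → u.get ⟨j, hju⟩ = v.get ⟨j, hjv⟩) ∧
    u.get ⟨i, hu⟩ < v.get ⟨i, hv⟩

end BetaShift

namespace BetaShift

variable {A : Type*} {m : ℕ}

theorem shift_iter : ∀ (a : ℕ) (x : ℕ → A) (n : ℕ), shift^[a] x n = x (a + n) := by
  intro a
  induction a with
  | zero => intro x n; simp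
  | succ a ih =>
    intro x n
    rw [Function.iterate_succ_apply, ih (shift x) n]
    simp only [shift]
    congr 1
    omega

theorem seqLe_iff [LinearOrder A] {x y : ℕ → A} :
    SeqLe x y ↔ ∀ i, (∀ j, j < i → x j = y j) → x i ≤ y i := by
  constructor
  · rintro (rfl | ⟨i0, hpre, hlt⟩) i hi
    · exact le_rfl
    · rcases lt_trichotomy i i0 with h | rfl | h
      · exact le_of_eq (hpre i h)
      · exact le_of_lt hlt
      · exact absurd (hi i0 h) (ne_of_lt hlt)
  · intro h
    by_cases hxy : x = y
    · exact Or.inl hxy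
    · right
      have hne : ∃ j, x j ≠ y j := by
        by_contra hc; push_neg at hc; exact hxy (funext hc)
      classical
      refine ⟨Nat.find hne, fun j hj => not_not.mp (Nat.find_min hne hj), ?_⟩
      exact lt_of_le_of_ne (h _ (fun j hj => not_not.mp (Nat.find_min hne hj))) (Nat.find_spec hne)

/-- Word-vs-sequence lexicographic comparison. -/
def WLe [LinearOrder A] (u : List A) (x : ℕ → A) : Prop :=
  ∀ t (ht : t < u.length), (∀ j (hj : j < u.length), j < t → u[j] = x j) → u[t] ≤ x t

/-- Every "suffix" of the word `u` is lexicographically at most the corresponding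
prefix of `x`. -/
def AdmW [LinearOrder A] (x : ℕ → A) (u : List A) : Prop :=
  ∀ i t (h : i + t < u.length),
    (∀ j (hj : i + j < u.length), j < t → u[i + j] = x j) → u[i + t] ≤ x t

theorem wle_trans [LinearOrder A] {u : List A} {x y : ℕ → A}
    (h1 : WLe u x) (h2 : SeqLe x y) : WLe u y := by
  classical
  intro t ht hpre
  by_cases hall : ∀ j (hj : j < u.length), j < t → u[j] = x j
  · refine le_trans (h1 t ht hall) (seqLe_iff.mp h2 t fun j hj => ?_)
    rw [← hall j (lt_trans hj ht) hj, hpre j (lt_trans hj ht) hj]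
  · push_neg at hall
    exfalso
    have hQ : ∃ j, ∃ (hj : j < u.length), j < t ∧ u[j] ≠ x j := by
      obtain ⟨j, hj, hjt, hne⟩ := hall; exact ⟨j, hj, hjt, hne⟩
    have dec : DecidablePred fun j => ∃ (hj : j < u.length), j < t ∧ u[j] ≠ x j :=
      fun _ => Classical.dec _
    set j0 := Nat.find hQ with hj0def
    obtain ⟨hj0, hj0t, hj0ne⟩ := Nat.find_spec hQ
    have hmin : ∀ j (hj : j < u.length), j < j0 → u[j] = x j := by
      intro j hj hjlt
      by_contra hc
      exact Nat.find_min hQ hjlt ⟨hj, lt_trans hjlt hj0t, hc⟩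
    have h1' : u[j0] < x j0 := lt_of_le_of_ne (h1 j0 hj0 hmin) hj0ne
    have h2' : x j0 ≤ y j0 := seqLe_iff.mp h2 j0 fun j hj => by
      rw [← hmin j (lt_trans hj hj0) hj, hpre j (lt_trans hj hj0) (lt_trans hj hj0t)]
    have hc := lt_of_lt_of_le h1' h2'
    rw [← hpre j0 hj0 hj0t] at hc
    exact lt_irrefl _ hc

section Adm
variable {d : ℕ → Fin m} (hd : Admissible d)

include hd in
theorem dle : ∀ s t, (∀ j, j < t → d (s + j) = d j) → d (s + t) ≤ d t := by
  intro s t hpre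
  have := seqLe_iff.mp (hd.1 s) t (by intro j hj; rw [shift_iter]; exact hpre j hj)
  rwa [shift_iter] at this

include hd in
theorem d0_ne : (d 0).val ≠ 0 := by
  obtain ⟨i, -, hi⟩ := hd.2 0
  have : d i ≤ d 0 := by
    have := dle hd i 0 (by intro j hj; omega)
    simpa using this
  have : (d i).val ≤ (d 0).val := this
  omega
end Adm

/-- Suffix characterisation via indices. -/
theorem suffix_iff_getElem {d : ℕ → A} {w : List A} {k : ℕ} (hk : k ≤ w.length) :
    prefixWord d k <:+ w ↔ ∀ j (h : j < k), w[w.length - k + j]'(by omega) = d j := by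
  rw [List.suffix_iff_eq_drop]
  have hlen : (prefixWord d k).length = k := by simp [prefixWord]
  constructor
  · intro heq j hj
    have h2 : (prefixWord d k)[j]'(by omega) = d j := by simp [prefixWord]
    have h4 := List.getElem_of_eq heq (show j < (prefixWord d k).length by omega)
    rw [List.getElem_drop] at h4
    rw [← h2, h4]
    congr 1
    omega
  · intro hall
    rw [hlen]
    apply List.ext_getElem
    · simp; omega
    · intro i h1 h2
      rw [List.getElem_drop]
      have h3 : i < k := by omega
      rw [hall i h3]
      simp [prefixWord]

def extSeq (d : ℕ → Fin m) (w : List (Fin m)) (K : ℕ) : ℕ → Fin m :=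
  fun j => if h : j < w.length then w[j] else d (K + (j - w.length))

theorem extSeq_lt {d : ℕ → Fin m} {w : List (Fin m)} {K j : ℕ} (h : j < w.length) :
    extSeq d w K j = w[j] := dif_pos h

theorem extSeq_ge {d : ℕ → Fin m} {w : List (Fin m)} {K j : ℕ} (h : ¬ j < w.length) :
    extSeq d w K j = d (K + (j - w.length)) := dif_neg h

theorem mem_lang_iff {d : ℕ → Fin m} (hd : Admissible d) {w : List (Fin m)} :
    w ∈ Lang d ↔ AdmW d w := by
  constructor
  · rintro ⟨x, hx, i0, hocc⟩
    have hxw : ∀ j (hj : j < w.length), x (i0 + j) = w[j] := by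
      intro j hj
      have := hocc ⟨j, hj⟩
      simpa [List.get_eq_getElem] using this
    intro i t h hpre
    have hle := seqLe_iff.mp (hx (i0 + i)) t (by
      intro j hj
      rw [shift_iter]
      have h2 : i0 + i + j = i0 + (i + j) := by omega
      rw [h2, hxw (i + j) (by omega)]
      exact hpre j (by omega) hj)
    rw [shift_iter] at hle
    have h2 : i0 + i + t = i0 + (i + t) := by omega
    rw [h2, hxw (i + t) h] at hle
    exact hle
  · intro hw
    classical
    set n := w.length with hn
    set K := Nat.findGreatest (fun k => prefixWord d k <:+ w) n with hKdef
    have hKn : K ≤ n := Nat.findGreatest_le n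
    have hP0 : prefixWord d 0 <:+ w := by
      have : prefixWord d 0 = ([] : List (Fin m)) := by simp [prefixWord]
      rw [this]; exact List.nil_suffix
    have hPK : prefixWord d K <:+ w := by
      have := Nat.findGreatest_spec (P := fun k => prefixWord d k <:+ w) (Nat.zero_le n) hP0
      simpa using this
    have hK := (suffix_iff_getElem hKn).mp hPK
    have hx : extSeq d w K ∈ XSet d := by
      intro i
      rw [seqLe_iff]
      intro t hpre
      simp only [shift_iter] at hpre ⊢
      by_cases h1 : i + t < n
      · rw [extSeq_lt h1]
        apply hw i t h1
        intro j hj hjt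
        rw [← hpre j hjt, extSeq_lt hj]
      · by_cases h2 : n ≤ i
        · set s := K + (i - n) with hs
          have hxe : ∀ j, extSeq d w K (i + j) = d (s + j) := by
            intro j
            rw [extSeq_ge (by omega)]
            congr 1
            omega
          rw [hxe t]
          apply dle hd
          intro j hj
          rw [← hxe j]
          exact hpre j hj
        · have hi : i < n := by omega
          have hrt : n - i ≤ t := by omega
          set r := n - i with hr
          have hr1 : 1 ≤ r := by omega
          have hmatch : ∀ j (hj : j < r), w[n - r + j]'(by omega) = d j := by
            intro j hj
            have hjn : i + j < n := by omega
            have h3 : extSeq d w K (i + j) = d j := hpre j (by omega)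
            rw [extSeq_lt hjn] at h3
            rw [← h3]
            congr 1
            omega
          have hrK : r ≤ K :=
            Nat.le_findGreatest (by omega) ((suffix_iff_getElem (by omega)).mpr hmatch)
          set s := K - r with hs
          have hds : ∀ j, j < t → d (s + j) = d j := by
            intro j hj
            by_cases hjr : j < r
            · have h5 : s + j < K := by omega
              calc d (s + j) = w[n - K + (s + j)]'(by omega) := (hK (s + j) h5).symm
                _ = w[n - r + j]'(by omega) := by congr 1; omega
                _ = d j := hmatch j hjr
            · have h8 : ¬ (i + j < n) := by omega
              have h3 := hpre j hj
              rw [extSeq_ge h8] at h3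
              have h9 : K + (i + j - n) = s + j := by omega
              rw [h9] at h3
              exact h3
          have hfin := dle hd s t hds
          rw [extSeq_ge (by omega : ¬ (i + t < n))]
          have h9 : K + (i + t - n) = s + t := by omega
          rw [h9]
          exact hfin
    refine ⟨extSeq d w K, hx, 0, ?_⟩
    intro j
    have hj : (j : ℕ) < n := j.isLt
    rw [List.get_eq_getElem]
    have : (0 : ℕ) + (j : ℕ) = (j : ℕ) := by omega
    rw [this, extSeq_lt hj]

theorem shifts_seqLe {d : ℕ → Fin m} (hd : Admissible d) {r k : ℕ} (hrk : r ≤ k)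
    (hagree : ∀ j, j < r → d (k - r + j) = d j) :
    SeqLe (shift^[k] d) (shift^[r] d) := by
  rw [seqLe_iff]
  intro t hpre
  simp only [shift_iter] at hpre ⊢
  have h1 : ∀ j, j < r + t → d (k - r + j) = d j := by
    intro j hj
    by_cases hjr : j < r
    · exact hagree j hjr
    · have h2 : k - r + j = k + (j - r) := by omega
      rw [h2]
      have h3 := hpre (j - r) (by omega)
      have h4 : r + (j - r) = j := by omega
      rw [h4] at h3
      exact h3
  have := dle hd (k - r) (r + t) h1
  have h5 : k - r + (r + t) = k + t := by omega
  rwa [h5] at this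

/-- Candidate follower sets. -/
def G (d : ℕ → Fin m) (k : ℕ) : Set (List (Fin m)) :=
  {u | AdmW d u ∧ WLe u (shift^[k] d)}

theorem fol_eq {d : ℕ → Fin m} (hd : Admissible d) {w : List (Fin m)} (hw : w ∈ Lang d) :
    Fol d w = G d (Nat.findGreatest (fun k => prefixWord d k <:+ w) w.length) := by
  classical
  set n := w.length with hn
  obtain ⟨K, hKdef⟩ : ∃ K, Nat.findGreatest (fun k => prefixWord d k <:+ w) n = K := ⟨_, rfl⟩
  rw [hKdef]
  have hKn : K ≤ n := hKdef ▸ Nat.findGreatest_le n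
  have hP0 : prefixWord d 0 <:+ w := by
    have : prefixWord d 0 = ([] : List (Fin m)) := by simp [prefixWord]
    rw [this]; exact List.nil_suffix
  have hPK : prefixWord d K <:+ w := by
    have := Nat.findGreatest_spec (P := fun k => prefixWord d k <:+ w) (Nat.zero_le n) hP0
    rwa [hKdef] at this
  have hK := (suffix_iff_getElem hKn).mp hPK
  have hmaxK : ∀ k, k ≤ n → prefixWord d k <:+ w → k ≤ K := fun k hk hsuf =>
    hKdef ▸ Nat.le_findGreatest hk hsuf
  have hwA : AdmW d w := (mem_lang_iff hd).mp hw
  ext u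
  set ℓ := u.length with hℓ
  have hlen : (w ++ u).length = n + ℓ := by simp; rfl
  have hgetl : ∀ j (hj : j < n) (hj2 : j < (w ++ u).length), (w ++ u)[j] = w[j] :=
    fun j hj hj2 => List.getElem_append_left hj
  have hgetr : ∀ j (hj : n ≤ j) (hj2 : j < (w ++ u).length),
      (w ++ u)[j] = u[j - n]'(by simp at hj2; omega) :=
    fun j hj hj2 => List.getElem_append_right hj
  constructor
  · intro hu
    have hA : AdmW d (w ++ u) := (mem_lang_iff hd).mp hu
    constructor
    · -- AdmW d u
      intro i t h hpre
      have h2 : n + i + t < (w ++ u).length := by omega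
      have := hA (n + i) t h2 (by
        intro j hj hjt
        have h3 : n ≤ n + i + j := by omega
        rw [hgetr (n + i + j) h3 hj]
        have h4 : n + i + j - n = i + j := by omega
        -- index juggling
        have h5 : u[n + i + j - n]'(by simp at hj; omega) = u[i + j]'(by simp at hj; omega) := by
          congr 1 <;> omega
        exact h5.trans (hpre j (by simp at hj; omega) hjt))
      rw [hgetr (n + i + t) (by omega) h2] at this
      have h6 : u[n + i + t - n]'(by omega) = u[i + t]'h := by congr 1; omega
      rwa [h6] at this
    · -- WLe u (shift^[K] d)
      intro t' ht' hpre
      simp only [shift_iter] at hpre ⊢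
      have h2 : (n - K) + (K + t') < (w ++ u).length := by omega
      have := hA (n - K) (K + t') h2 (by
        intro j hj hjt
        by_cases hjK : j < K
        · have h3 : n - K + j < n := by omega
          rw [hgetl _ h3 hj]
          exact hK j hjK
        · have h3 : n ≤ n - K + j := by omega
          rw [hgetr _ h3 hj]
          have h4 : u[n - K + j - n]'(by simp at hj; omega) = u[j - K]'(by simp at hj; omega) := by
            congr 1; omega
          rw [h4, hpre (j - K) (by simp at hj; omega) (by omega)]
          congr 1
          omega)
      rw [hgetr _ (by omega) h2] at this
      have h6 : u[n - K + (K + t') - n]'(by omega) = u[t']'ht' := by congr 1; omega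
      rw [h6] at this
      have h7 : K + t' = K + t' := rfl
      exact this
  · rintro ⟨huA, huW⟩
    rw [Fol, Set.mem_setOf_eq, mem_lang_iff hd]
    intro i t h hpre
    rw [hlen] at h
    by_cases h1 : n ≤ i
    · -- inside u
      rw [hgetr (i + t) (by omega) (by omega)]
      have h6 : u[i + t - n]'(by omega) = u[(i - n) + t]'(by omega) := by congr 1; omega
      rw [h6]
      apply huA (i - n) t (by omega)
      intro j hj hjt
      have h7 := hpre j (by omega) hjt
      rw [hgetr (i + j) (by omega) (by omega)] at h7
      have h8 : u[(i - n) + j]'hj = u[i + j - n]'(by omega) := by congr 1; omega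
      rw [h8]
      exact h7
    · by_cases h2 : i + t < n
      · -- inside w
        rw [hgetl (i + t) h2 (by omega)]
        apply hwA i t h2
        intro j hj hjt
        have h7 := hpre j (by omega) hjt
        rwa [hgetl (i + j) hj (by omega)] at h7
      · -- crossing
        have hi : i < n := by omega
        set r := n - i with hr
        have hrt : r ≤ t := by omega
        have hr1 : 1 ≤ r := by omega
        have hmatch : ∀ j (hj : j < r), w[n - r + j]'(by omega) = d j := by
          intro j hj
          have h7 := hpre j (by omega) (by omega)
          rw [hgetl (i + j) (by omega) (by omega)] at h7
          rw [← h7]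
          congr 1
          omega
        have hrK : r ≤ K := by
          refine hmaxK r (by omega) ?_
          refine (suffix_iff_getElem (by omega)).mpr ?_
          intro j hj
          exact hmatch j hj
        have hagree : ∀ j, j < r → d (K - r + j) = d j := by
          intro j hj
          calc d (K - r + j) = w[n - K + (K - r + j)]'(by omega) := (hK (K - r + j) (by omega)).symm
            _ = w[n - r + j]'(by omega) := by congr 1; omega
            _ = d j := hmatch j hj
        have hT1 : SeqLe (shift^[K] d) (shift^[r] d) := shifts_seqLe hd hrK hagree
        have hWr : WLe u (shift^[r] d) := wle_trans huW hT1
        rw [hgetr (i + t) (by omega) (by omega)]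
        have h6 : u[i + t - n]'(by omega) = u[t - r]'(by omega) := by congr 1; omega
        rw [h6]
        refine le_trans (hWr (t - r) (by omega) ?_)
          (le_of_eq ((shift_iter r d (t - r)).trans (by congr 1; omega)))
        intro j' hj' hjt'
        rw [shift_iter r d j']
        have h7 := hpre (r + j') (by omega) (by omega)
        rw [hgetr (i + (r + j')) (by omega) (by omega)] at h7
        have h8 : u[j']'hj' = u[i + (r + j') - n]'(by omega) := by congr 1; omega
        rw [h8]
        exact h7

theorem G_congr {d : ℕ → Fin m} {a b : ℕ} (h : shift^[a] d = shift^[b] d) :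
    G d a = G d b := by unfold G; rw [h]

theorem G_ne {d : ℕ → Fin m} (hd : Admissible d) {a b i : ℕ}
    (hpre : ∀ j, j < i → d (a + j) = d (b + j)) (hlt : d (a + i) < d (b + i)) :
    G d a ≠ G d b := by
  intro heq
  set u : List (Fin m) := List.ofFn (fun j : Fin (i + 1) => d (b + j)) with hu
  have hul : u.length = i + 1 := by simp [hu]
  have huget : ∀ j (hj : j < u.length), u[j] = d (b + j) := by
    intro j hj
    rw [List.getElem_of_eq hu hj, List.getElem_ofFn]
  have humem : u ∈ G d b := by
    constructor
    · intro i' t h hpre'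
      rw [huget (i' + t) h]
      have : b + (i' + t) = (b + i') + t := by omega
      rw [this]
      apply dle hd
      intro j hj
      have h7 := hpre' j (by omega) hj
      rw [huget (i' + j) (by omega)] at h7
      have h8 : b + i' + j = b + (i' + j) := by omega
      rw [h8]
      exact h7
    · intro t ht _
      exact le_of_eq ((huget t ht).trans (shift_iter b d t).symm)
  rw [← heq] at humem
  obtain ⟨-, hW⟩ := humem
  have := hW i (by omega) (by
    intro j hj hji
    rw [huget j hj, shift_iter, hpre j hji])
  rw [huget i (by omega), shift_iter] at this
  exact absurd this (not_le_of_gt hlt)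

theorem G_inj {d : ℕ → Fin m} (hd : Admissible d) {a b : ℕ}
    (hne : shift^[a] d ≠ shift^[b] d) : G d a ≠ G d b := by
  classical
  have hne' : ∃ i, d (a + i) ≠ d (b + i) := by
    by_contra hc
    push_neg at hc
    exact hne (funext fun t => by rw [shift_iter, shift_iter, hc t])
  set i := Nat.find hne' with hi
  have hpre : ∀ j, j < i → d (a + j) = d (b + j) :=
    fun j hj => not_not.mp (Nat.find_min hne' hj)
  rcases lt_or_gt_of_ne (Nat.find_spec hne') with hlt | hlt
  · exact G_ne hd hpre hlt
  · exact (G_ne hd (fun j hj => (hpre j hj).symm) hlt).symm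

theorem realize {d : ℕ → Fin m} (hm : 1 ≤ m) (hd : Admissible d) {n k : ℕ} (hk : k ≤ n) :
    ∃ w ∈ Lang d, w.length = n ∧ Fol d w = G d k := by
  classical
  set z : Fin m := ⟨0, hm⟩ with hz
  set w : List (Fin m) := List.replicate (n - k) z ++ prefixWord d k with hw
  have hlen : w.length = n := by simp [hw, prefixWord]; omega
  have hget1 : ∀ j (hj : j < n - k), w[j]'(by omega) = z := by
    intro j hj
    rw [List.getElem_of_eq hw (by omega), List.getElem_append_left (by simpa using hj)]
    simp
  have hget2 : ∀ j (hj : n - k ≤ j) (hj2 : j < n), w[j]'(by omega) = d (j - (n - k)) := by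
    intro j hj hj2
    rw [List.getElem_of_eq hw (by omega), List.getElem_append_right (by simpa using hj)]
    simp [prefixWord]
  have hz_ne : z ≠ d 0 := by
    intro hc
    exact d0_ne hd (by rw [← hc])
  have hwA : AdmW d w := by
    intro i t h hpre
    rw [hlen] at h
    by_cases hik : n - k ≤ i
    · rw [hget2 (i + t) (by omega) (by omega)]
      have h5 : i + t - (n - k) = (i - (n - k)) + t := by omega
      rw [h5]
      apply dle hd
      intro j hj
      have h7 := hpre j (by omega) hj
      rw [hget2 (i + j) (by omega) (by omega)] at h7
      have h8 : i - (n - k) + j = i + j - (n - k) := by omega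
      rw [h8]
      exact h7
    · push_neg at hik
      rcases Nat.eq_zero_or_pos t with rfl | ht
      · rw [hget1 (i + 0) (by omega)]
        exact Nat.zero_le _
      · exfalso
        have h7 := hpre 0 (by omega) ht
        rw [hget1 (i + 0) (by omega)] at h7
        exact hz_ne h7
  have hwL : w ∈ Lang d := (mem_lang_iff hd).mpr hwA
  have hGK : Nat.findGreatest (fun k' => prefixWord d k' <:+ w) w.length = k := by
    have hub : Nat.findGreatest (fun k' => prefixWord d k' <:+ w) w.length ≤ k := by
      by_contra hc
      push_neg at hc
      set K := Nat.findGreatest (fun k' => prefixWord d k' <:+ w) w.length with hK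
      have hKn : K ≤ w.length := Nat.findGreatest_le w.length
      have hP0 : prefixWord d 0 <:+ w := by
        have : prefixWord d 0 = ([] : List (Fin m)) := by simp [prefixWord]
        rw [this]; exact List.nil_suffix
      have hPK : prefixWord d K <:+ w := by
        have := Nat.findGreatest_spec (P := fun k' => prefixWord d k' <:+ w)
          (Nat.zero_le w.length) hP0
        simpa using this
      have h0 := (suffix_iff_getElem hKn).mp hPK 0 (by omega)
      have h1 : w[w.length - K + 0]'(by omega) = z := by
        apply hget1
        omega
      rw [h0] at h1
      exact hz_ne h1.symm
    have hlb : k ≤ Nat.findGreatest (fun k' => prefixWord d k' <:+ w) w.length := by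
      apply Nat.le_findGreatest (by omega)
      exact List.suffix_append _ _
    omega
  refine ⟨w, hwL, hlen, ?_⟩
  rw [fol_eq hd hwL, hGK]

theorem folSets_eq {d : ℕ → Fin m} (hm : 1 ≤ m) (hd : Admissible d) (n : ℕ) :
    {S | ∃ w ∈ Lang d, w.length = n ∧ S = Fol d w} = (fun k => G d k) '' Set.Iic n := by
  ext S
  constructor
  · rintro ⟨w, hw, hlen, rfl⟩
    refine ⟨Nat.findGreatest (fun k => prefixWord d k <:+ w) w.length, ?_, ?_⟩
    · have := Nat.findGreatest_le (P := fun k => prefixWord d k <:+ w) w.length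
      simp only [Set.mem_Iic]
      omega
    · exact (fol_eq hd hw).symm
  · rintro ⟨k, hk, rfl⟩
    obtain ⟨w, hw, hlen, hfol⟩ := realize hm hd (Set.mem_Iic.mp hk)
    exact ⟨w, hw, hlen, hfol.symm⟩

end BetaShift

open BetaShift

/-- for sofic (eventually periodic) `d`, with `p` the least `j` such
that `σ^k d = σ^j d` for some `k < j`, `|F(n)| = n+1` for `n < p` and `|F(n)| = p`
for `n ≥ p`. -/
theorem stmt8 (m : ℕ) (hm : 1 ≤ m) (d : ℕ → Fin m) (hd : Admissible d)
    (hper : EventuallyPeriodic d) :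
    {j : ℕ | ∃ k, k < j ∧ shift^[k] d = shift^[j] d}.Nonempty ∧
    ∀ n : ℕ,
      (n < sInf {j : ℕ | ∃ k, k < j ∧ shift^[k] d = shift^[j] d} →
        FolCount d n = n + 1) ∧
      (sInf {j : ℕ | ∃ k, k < j ∧ shift^[k] d = shift^[j] d} ≤ n →
        FolCount d n = sInf {j : ℕ | ∃ k, k < j ∧ shift^[k] d = shift^[j] d}) := by
  classical
  set SS := {j : ℕ | ∃ k, k < j ∧ shift^[k] d = shift^[j] d} with hSS
  have hSne : SS.Nonempty := by
    obtain ⟨p0, hp0, N, hN⟩ := hper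
    refine ⟨N + p0, N, by omega, ?_⟩
    funext t
    rw [shift_iter, shift_iter]
    have h1 := hN (N + t) (by omega)
    rw [← h1]
    congr 1
    omega
  refine ⟨hSne, ?_⟩
  set p := sInf SS with hpdef
  obtain ⟨k0, hk0p, hk0⟩ : ∃ k, k < p ∧ shift^[k] d = shift^[p] d := Nat.sInf_mem hSne
  have hinj : Set.InjOn (fun k => G d k) (Set.Iio p) := by
    intro a ha b hb heq
    simp only [Set.mem_Iio] at ha hb
    have hsh : shift^[a] d = shift^[b] d := by
      by_contra hsne
      exact G_inj hd hsne heq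
    rcases Nat.lt_trichotomy a b with h | h | h
    · have hmem : b ∈ SS := ⟨a, h, hsh⟩
      have := Nat.sInf_le hmem
      omega
    · exact h
    · have hmem : a ∈ SS := ⟨b, h, hsh.symm⟩
      have := Nat.sInf_le hmem
      omega
  intro n
  constructor
  · intro hn
    have hsub : Set.Iic n ⊆ Set.Iio p := by
      intro j hj
      simp only [Set.mem_Iic] at hj
      simp only [Set.mem_Iio]
      omega
    unfold FolCount
    rw [folSets_eq hm hd, Set.ncard_image_of_injOn (hinj.mono hsub)]
    simp [← Nat.card_coe_set_eq, Nat.card_eq_fintype_card]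
  · intro hn
    have key : ∀ k, G d k ∈ (fun k => G d k) '' Set.Iio p := by
      intro k
      induction k using Nat.strong_induction_on with
      | _ k ih =>
        by_cases hk : k < p
        · exact ⟨k, hk, rfl⟩
        · push_neg at hk
          have hsh : shift^[k] d = shift^[k0 + (k - p)] d := by
            have h1 : shift^[k] d = shift^[k - p] (shift^[p] d) := by
              rw [← Function.iterate_add_apply]
              congr 1
              omega
            rw [h1, ← hk0, ← Function.iterate_add_apply]
            congr 1
            omega
          rw [G_congr hsh]
          exact ih (k0 + (k - p)) (by omega)
    have himg : (fun k => G d k) '' Set.Iic n = (fun k => G d k) '' Set.Iio p := by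
      apply Set.Subset.antisymm
      · rintro S ⟨k, hk, rfl⟩
        exact key k
      · apply Set.image_mono
        intro j hj
        simp only [Set.mem_Iio] at hj
        simp only [Set.mem_Iic]
        omega
    unfold FolCount
    rw [folSets_eq hm hd, himg, Set.ncard_image_of_injOn hinj]
    simp [← Nat.card_coe_set_eq, Nat.card_eq_fintype_card]
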